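/- The arc estimate: for R > 0, |∫₀^{π/6} i·R·e^{iθ}·exp(i R³ e^{3iθ}) dθ| ≤ (π/(6R²))·(1 − e^{−R³}), and in particular this arc integral tends to 0 as R → ∞. -/

import Mathlib

open Filter

/-- Arc estimate: for `R > 0`, the arc integral `J(R)` satisfies
`|J(R)| ≤ (π/(6R²))(1 − e^{−R³})`, and `J(R) → 0` as `R → ∞`. -/
theorem arc_integral_estimate :
    (∀ R : ℝ, 0 < R →
        ‖(∫ θ in (0:ℝ)..(Real.pi / 6),
              Complex.I * (R:ℂ) * Complex.exp (Complex.I * (θ:ℂ))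
                * Complex.exp (Complex.I * (R:ℂ) ^ 3
                    * Complex.exp (3 * Complex.I * (θ:ℂ))))‖
          ≤ Real.pi / (6 * R ^ 2) * (1 - Real.exp (-(R ^ 3)))) ∧
    Tendsto
      (fun R : ℝ =>
        ∫ θ in (0:ℝ)..(Real.pi / 6),
          Complex.I * (R:ℂ) * Complex.exp (Complex.I * (θ:ℂ))
            * Complex.exp (Complex.I * (R:ℂ) ^ 3
                * Complex.exp (3 * Complex.I * (θ:ℂ))))
      atTop (nhds 0) := by
  have pi_pos := Real.pi_pos
  have key : ∀ R : ℝ, 0 < R →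
      ‖(∫ θ in (0:ℝ)..(Real.pi / 6),
            Complex.I * (R:ℂ) * Complex.exp (Complex.I * (θ:ℂ))
              * Complex.exp (Complex.I * (R:ℂ) ^ 3
                  * Complex.exp (3 * Complex.I * (θ:ℂ))))‖
        ≤ Real.pi / (6 * R ^ 2) * (1 - Real.exp (-(R ^ 3))) := by
    intro R hR
    set c : ℝ := 6 * R ^ 3 / Real.pi with hc
    have hcpos : 0 < c := by positivity
    have hnorm : ∀ θ : ℝ, ‖
        (Complex.I * (R:ℂ) * Complex.exp (Complex.I * (θ:ℂ))
          * Complex.exp (Complex.I * (R:ℂ) ^ 3 * Complex.exp (3 * Complex.I * (θ:ℂ))))‖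
        = R * Real.exp (-(R ^ 3 * Real.sin (3 * θ))) := by
      intro θ
      simp [← Complex.ofReal_pow, map_mul, Complex.norm_exp, Complex.mul_re, Complex.mul_im,
        Complex.exp_re, Complex.exp_im, abs_of_pos hR, mul_comm]
    have hgint : IntervalIntegrable (fun θ : ℝ => R * Real.exp (-(c * θ)))
        MeasureTheory.volume 0 (Real.pi / 6) := by
      apply Continuous.intervalIntegrable; continuity
    have hbound : ∀ θ ∈ Set.uIoc (0:ℝ) (Real.pi / 6),
        ‖Complex.I * (R:ℂ) * Complex.exp (Complex.I * (θ:ℂ))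
          * Complex.exp (Complex.I * (R:ℂ) ^ 3 * Complex.exp (3 * Complex.I * (θ:ℂ)))‖
        ≤ R * Real.exp (-(c * θ)) := by
      intro θ hθ
      rw [Set.uIoc_of_le (by positivity)] at hθ
      rw [hnorm θ]
      have h1 : 2 / Real.pi * (3 * θ) ≤ Real.sin (3 * θ) :=
        Real.mul_le_sin (by nlinarith [hθ.1]) (by nlinarith [hθ.2])
      have h2 : c * θ ≤ R ^ 3 * Real.sin (3 * θ) := by
        have : R ^ 3 * (2 / Real.pi * (3 * θ)) ≤ R ^ 3 * Real.sin (3 * θ) :=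
          mul_le_mul_of_nonneg_left h1 (by positivity)
        calc c * θ = R ^ 3 * (2 / Real.pi * (3 * θ)) := by
              rw [hc]; ring
          _ ≤ _ := this
      exact mul_le_mul_of_nonneg_left (Real.exp_le_exp.2 (by linarith)) hR.le
    have hval : (∫ θ in (0:ℝ)..(Real.pi / 6), R * Real.exp (-(c * θ)))
        = Real.pi / (6 * R ^ 2) * (1 - Real.exp (-(R ^ 3))) := by
      have : (∫ θ in (0:ℝ)..(Real.pi / 6), Real.exp (-c * θ))
          = (-c)⁻¹ • (Real.exp (-c * (Real.pi / 6)) - Real.exp (-c * 0)) := by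
        rw [intervalIntegral.integral_comp_mul_left Real.exp (neg_ne_zero.2 hcpos.ne'),
          integral_exp]
      simp only [neg_mul] at this
      rw [intervalIntegral.integral_const_mul, this]
      have hcR : c * (Real.pi / 6) = R ^ 3 := by
        rw [hc, div_mul_eq_mul_div, div_eq_iff (by positivity)]; ring
      rw [hcR]
      simp only [mul_zero, neg_zero, Real.exp_zero, smul_eq_mul]
      field_simp [hc]
      have hcpi : c * Real.pi = 6 * R ^ 3 := by linarith [hcR]
      linear_combination (Real.exp (-R ^ 3) - 1) * hcpi
    calc ‖(∫ θ in (0:ℝ)..(Real.pi / 6),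
          Complex.I * (R:ℂ) * Complex.exp (Complex.I * (θ:ℂ))
            * Complex.exp (Complex.I * (R:ℂ) ^ 3 * Complex.exp (3 * Complex.I * (θ:ℂ))))‖
        ≤ |∫ θ in (0:ℝ)..(Real.pi / 6), R * Real.exp (-(c * θ))| :=
          (intervalIntegral.norm_integral_le_of_norm_le (by positivity)
            (MeasureTheory.ae_of_all _ (fun θ hθ =>
              hbound θ (by rwa [Set.uIoc_of_le (by positivity)]))) hgint).trans (le_abs_self _)
      _ = Real.pi / (6 * R ^ 2) * (1 - Real.exp (-(R ^ 3))) := by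
          rw [hval]
          have h1 : Real.exp (-(R ^ 3)) ≤ 1 := Real.exp_le_one_iff.2 (by nlinarith)
          exact abs_of_nonneg (mul_nonneg (by positivity) (by linarith))
  refine ⟨key, ?_⟩
  rw [tendsto_zero_iff_norm_tendsto_zero]
  apply squeeze_zero' (Eventually.of_forall fun R => norm_nonneg _)
  · filter_upwards [eventually_gt_atTop (0:ℝ)] with R hR
    calc ‖_‖ ≤ Real.pi / (6 * R ^ 2) * (1 - Real.exp (-(R ^ 3))) := key R hR
      _ ≤ Real.pi / (6 * R ^ 2) * 1 := by
          have h1 : 1 - Real.exp (-(R ^ 3)) ≤ 1 := by linarith [Real.exp_pos (-(R ^ 3))]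
          exact mul_le_mul_of_nonneg_left h1 (by positivity)
      _ = Real.pi / (6 * R ^ 2) := mul_one _
  · have h6 : Tendsto (fun R : ℝ => 6 * R ^ 2) atTop atTop :=
      (tendsto_pow_atTop two_ne_zero).const_mul_atTop (by norm_num)
    simpa using tendsto_const_nhds.div_atTop h6
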